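/- Let m be a natural number and let x, y, z : Fin m → ℚ be three pairwise distinct points such that each of x, y, z is a vertex of the standard m-cube and moreover the sum of the coordinates of each of x, y, z equals 1 or -1. Then x, y, z do not lie on a common affine line, i.e. ¬ Collinear ℚ {x, y, z}. -/

import Mathlib

theorem cube_vertices_sum_pm_one_not_collinear (m : ℕ) (x y z : Fin m → ℚ)
    (hx : ∀ i, x i = 1 ∨ x i = -1)
    (hy : ∀ i, y i = 1 ∨ y i = -1)
    (hz : ∀ i, z i = 1 ∨ z i = -1)
    (hxs : (∑ i, x i) = 1 ∨ (∑ i, x i) = -1)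
    (hys : (∑ i, y i) = 1 ∨ (∑ i, y i) = -1)
    (hzs : (∑ i, z i) = 1 ∨ (∑ i, z i) = -1)
    (hxy : x ≠ y) (hxz : x ≠ z) (hyz : y ≠ z) :
    ¬ Collinear ℚ ({x, y, z} : Set (Fin m → ℚ)) := by
  intro h
  obtain ⟨v, hv⟩ := (collinear_iff_of_mem (Set.mem_insert x _)).1 h
  obtain ⟨a, ha⟩ := hv y (by simp)
  obtain ⟨b, hb⟩ := hv z (by simp)
  obtain ⟨i, hi⟩ := Function.ne_iff.1 hxy
  have hai : y i = a * v i + x i := by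
    have := congrFun ha i; simpa using this
  have hbi : z i = b * v i + x i := by
    have := congrFun hb i; simpa using this
  have havi : a * v i ≠ 0 := fun h0 => hi (by rw [hai, h0, zero_add])
  have hvi : v i ≠ 0 := fun h0 => havi (by rw [h0, mul_zero])
  -- z i equals x i or y i
  have hcase : z i = x i ∨ z i = y i := by
    rcases hx i with h1 | h1 <;> rcases hy i with h2 | h2 <;>
      rcases hz i with h3 | h3 <;> (revert hi; norm_num [h1, h2, h3])
  rcases hcase with hc | hc
  · have hb0 : b = 0 := by
      have : b * v i = 0 := by linarith [hbi, hc]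
      exact (mul_eq_zero.1 this).resolve_right hvi
    exact hxz (by rw [hb, hb0, zero_smul]; simp)
  · have hba : b = a := by
      have : b * v i = a * v i := by linarith [hbi, hc, hai]
      exact mul_right_cancel₀ hvi this
    exact hyz (by rw [ha, hb, hba])
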